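/- arXiv:1403.7038 — 2 statements merged into one kernel-verified Lean document; each statement's English description precedes it below -/
import Mathlib

section
/- Let T_0 > 0. Let A_{uu} be a symmetric positive definite real n×n matrix, A_{zz} a symmetric positive definite real m×m matrix, A_{pp} a symmetric positive semidefinite real k×k matrix, B_{up} a real n×k matrix whose associated linear map \mathbb{R}^k \to \mathbb{R}^n is injective, and B_{zp} a real m×k matrix. Let \zeta : [0,T_0] \to \mathbb{R}^n be continuously differentiable, \xi : [0,T_0] \to \mathbb{R}^k continuous, and \gamma_0 \in \mathbb{R}^k. Then there exist unique continuously differentiable functions \alpha : [0,T_0] \to \mathbb{R}^n, \beta : [0,T_0] \to \mathbb{R}^m, \gamma : [0,T_0] \to \mathbb{R}^k with \gamma(0) = \gamma_0 such that for all t \in [0,T_0]: A_{uu}\,\alpha(t) = B_{up}\,\gamma(t) + \zeta(t), A_{zz}\,\beta(t) = -B_{zp}\,\gamma(t), and B_{up}^T\,\dot\alpha(t) + A_{pp}\,\dot\gamma(t) - B_{zp}^T\,\beta(t) = \xi(t). -/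
open Matrix Set NormedSpace
set_option synthInstance.maxHeartbeats 1000000
set_option maxHeartbeats 4000000
set_option maxHeartbeats 2000000

section ODE
variable {E : Type*} [NormedAddCommGroup E] [NormedSpace ℝ E] [CompleteSpace E]

noncomputable instance : NormedAlgebra ℚ (E →L[ℝ] E) := NormedAlgebra.restrictScalars ℚ ℝ (E →L[ℝ] E)

lemma linODE_exists (A : E →L[ℝ] E) (g : ℝ → E) (hg : Continuous g) (x0 : E) :
    ∃ f : ℝ → E, f 0 = x0 ∧ ∀ t, HasDerivAt f (A (f t) + g t) t := by
  have hcexp : ∀ B : E →L[ℝ] E, Continuous fun s : ℝ => exp (s • B) := fun B =>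
    (exp_continuous).comp (continuous_id.smul continuous_const)
  set h : ℝ → E := fun s => (exp (s • (-A))) (g s) with hh
  have hhc : Continuous h := (hcexp (-A)).clm_apply hg
  set I : ℝ → E := fun t => ∫ s in (0:ℝ)..t, h s with hI
  refine ⟨fun t => (exp (t • A)) (x0 + I t), by simp [hI, zero_smul, exp_zero], fun t => ?_⟩
  have hI' : HasDerivAt I (h t) t :=
    intervalIntegral.integral_hasDerivAt_right (hhc.intervalIntegrable _ _)
      (hhc.stronglyMeasurable.stronglyMeasurableAtFilter) hhc.continuousAt
  have hc' : HasDerivAt (fun u : ℝ => exp (u • A)) (exp (t • A) * A) t :=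
    hasDerivAt_exp_smul_const A t
  have := hc'.clm_apply ((hasDerivAt_const t x0).add hI')
  convert this using 1
  · rfl
  have hcomm : exp (t • A) * A = A * exp (t • A) :=
    (((Commute.refl A).smul_left t).exp_left).eq
  have hinv : exp (t • A) * exp (t • (-A)) = 1 := by
    rw [smul_neg, ← NormedSpace.exp_add_of_commute (Commute.refl (t • A)).neg_right]
    simp
  calc A ((exp (t • A)) (x0 + I t)) + g t
      = (exp (t • A) * A) (x0 + I t) + (exp (t • A) * exp (t • (-A))) (g t) := by
        rw [hcomm, hinv]; simp [ContinuousLinearMap.mul_apply]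
    _ = (exp (t • A) * A) (x0 + I t) + (exp (t • A)) (h t) := by
        simp [hh, ContinuousLinearMap.mul_apply]
    _ = _ := by rw [zero_add]; rfl

lemma linODE_unique (A : E →L[ℝ] E) {T : ℝ} (hT : 0 < T) (f : ℝ → E)
    (hc : ContinuousOn f (Icc 0 T))
    (hf : ∀ t ∈ Icc (0:ℝ) T, HasDerivWithinAt f (A (f t)) (Icc 0 T) t)
    (h0 : f 0 = 0) : ∀ t ∈ Icc (0:ℝ) T, f t = 0 := by
  set ψ : ℝ → E := fun t => (exp (t • (-A))) (f t) with hψ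
  have hψc : ContinuousOn ψ (Icc 0 T) :=
    (((exp_continuous (𝔸 := E →L[ℝ] E)).comp
      (continuous_id.smul continuous_const)).continuousOn).clm_apply hc
  have hψd : ∀ x ∈ Ico (0:ℝ) T, HasDerivWithinAt ψ 0 (Ici x) x := by
    intro x hx
    have hfx : HasDerivWithinAt f (A (f x)) (Ici x) x :=
      (hf x ⟨hx.1, hx.2.le⟩).mono_of_mem_nhdsWithin (Icc_mem_nhdsGE_of_mem ⟨hx.1, hx.2⟩)
    have hcx : HasDerivWithinAt (fun u : ℝ => exp (u • (-A)))
        (exp (x • (-A)) * (-A)) (Ici x) x :=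
      (hasDerivAt_exp_smul_const (-A) x).hasDerivWithinAt
    have := hcx.clm_apply hfx
    convert this using 1
    simp [ContinuousLinearMap.mul_apply]
  have hconst := constant_of_has_deriv_right_zero hψc hψd
  intro t ht
  have hψt : ψ t = 0 := by
    rw [hconst t ht, hψ]; simp [h0]
  have hinv : exp (t • A) * exp (t • (-A)) = 1 := by
    rw [smul_neg, ← NormedSpace.exp_add_of_commute (Commute.refl (t • A)).neg_right]
    simp
  have : (exp (t • A)) (ψ t) = f t := by
    rw [hψ]
    have := congrArg (fun M : E →L[ℝ] E => M (f t)) hinv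
    simpa [ContinuousLinearMap.mul_apply] using this
  rw [← this, hψt, map_zero]

end ODE

section MatrixAux
variable {N K : ℕ}

lemma posDef_transpose_mul_mul {A : Matrix (Fin N) (Fin N) ℝ} (hA : A.PosDef)
    {B : Matrix (Fin N) (Fin K) ℝ} (hB : Function.Injective B.mulVec) :
    (Bᵀ * A * B).PosDef := by
  rw [(conjTranspose_eq_transpose_of_trivial B).symm]
  exact hA.conjTranspose_mul_mul_same hB

lemma posDef_add_posSemidef {A B : Matrix (Fin K) (Fin K) ℝ} (hA : A.PosDef)
    (hB : B.PosSemidef) : (A + B).PosDef :=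
  hA.add_posSemidef hB

/-- matrix `mulVec` as a continuous linear map -/
noncomputable def mvL (A : Matrix (Fin N) (Fin K) ℝ) : (Fin K → ℝ) →L[ℝ] (Fin N → ℝ) :=
  LinearMap.toContinuousLinearMap A.mulVecLin

@[simp] lemma mvL_apply (A : Matrix (Fin N) (Fin K) ℝ) (v : Fin K → ℝ) :
    mvL A v = A *ᵥ v := rfl

end MatrixAux

/-- The property of being a continuously differentiable solution of the
differential-algebraic system arising from the semidiscrete three-field formulation of
Biot's consolidation model, in coefficient-vector (matrix) form. -/
def IsBiotDAESolution (T0 : ℝ) {n m k : ℕ}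
    (Auu : Matrix (Fin n) (Fin n) ℝ) (Azz : Matrix (Fin m) (Fin m) ℝ)
    (App : Matrix (Fin k) (Fin k) ℝ) (Bup : Matrix (Fin n) (Fin k) ℝ)
    (Bzp : Matrix (Fin m) (Fin k) ℝ)
    (ζ : ℝ → (Fin n → ℝ)) (ξ : ℝ → (Fin k → ℝ)) (γ0 : Fin k → ℝ)
    (α : ℝ → (Fin n → ℝ)) (β : ℝ → (Fin m → ℝ)) (γ : ℝ → (Fin k → ℝ)) : Prop :=
  ContDiffOn ℝ 1 α (Icc 0 T0) ∧ ContDiffOn ℝ 1 β (Icc 0 T0) ∧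
    ContDiffOn ℝ 1 γ (Icc 0 T0) ∧ γ 0 = γ0 ∧
    ∀ t ∈ Icc (0:ℝ) T0,
      Auu.mulVec (α t) = Bup.mulVec (γ t) + ζ t ∧
      Azz.mulVec (β t) = -(Bzp.mulVec (γ t)) ∧
      Bupᵀ.mulVec (derivWithin α (Icc 0 T0) t) +
          App.mulVec (derivWithin γ (Icc 0 T0) t) - Bzpᵀ.mulVec (β t) = ξ t

/-- Theorem 3.1 of the paper in matrix form: the semidiscrete DAE system has a unique
continuously differentiable solution for any initial data `γ0`, with `App` only positive
semidefinite (corresponding to the storage coefficient `c₀ ≥ 0`). -/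
theorem biot_dae_wellposed (T0 : ℝ) (hT0 : 0 < T0) (n m k : ℕ)
    (Auu : Matrix (Fin n) (Fin n) ℝ) (hAuu : Auu.PosDef)
    (Azz : Matrix (Fin m) (Fin m) ℝ) (hAzz : Azz.PosDef)
    (App : Matrix (Fin k) (Fin k) ℝ) (hApp : App.PosSemidef)
    (Bup : Matrix (Fin n) (Fin k) ℝ) (hBup : Function.Injective Bup.mulVec)
    (Bzp : Matrix (Fin m) (Fin k) ℝ)
    (ζ : ℝ → (Fin n → ℝ)) (hζ : ContDiffOn ℝ 1 ζ (Icc 0 T0))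
    (ξ : ℝ → (Fin k → ℝ)) (hξ : ContinuousOn ξ (Icc 0 T0))
    (γ0 : Fin k → ℝ) :
    ∃ α : ℝ → (Fin n → ℝ), ∃ β : ℝ → (Fin m → ℝ), ∃ γ : ℝ → (Fin k → ℝ),
      IsBiotDAESolution T0 Auu Azz App Bup Bzp ζ ξ γ0 α β γ ∧
      ∀ α' β' γ', IsBiotDAESolution T0 Auu Azz App Bup Bzp ζ ξ γ0 α' β' γ' →
        ∀ t ∈ Icc (0:ℝ) T0, α' t = α t ∧ β' t = β t ∧ γ' t = γ t := by
  classical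
  have hIccU : UniqueDiffOn ℝ (Icc (0:ℝ) T0) := uniqueDiffOn_Icc hT0
  -- invertibility facts
  have hAuuDet : IsUnit Auu.det := isUnit_iff_ne_zero.mpr hAuu.det_pos.ne'
  have hAzzDet : IsUnit Azz.det := isUnit_iff_ne_zero.mpr hAzz.det_pos.ne'
  have hAuu1 : Auu⁻¹ * Auu = 1 := Matrix.nonsing_inv_mul _ hAuuDet
  have hAuu1' : Auu * Auu⁻¹ = 1 := Matrix.mul_nonsing_inv _ hAuuDet
  have hAzz1 : Azz⁻¹ * Azz = 1 := Matrix.nonsing_inv_mul _ hAzzDet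
  have hAzz1' : Azz * Azz⁻¹ = 1 := Matrix.mul_nonsing_inv _ hAzzDet
  set C : Matrix (Fin k) (Fin n) ℝ := Bupᵀ * Auu⁻¹ with hC
  set M : Matrix (Fin k) (Fin k) ℝ := Bupᵀ * Auu⁻¹ * Bup + App with hM
  set N : Matrix (Fin k) (Fin k) ℝ := Bzpᵀ * Azz⁻¹ * Bzp with hN
  have hMpd : M.PosDef := posDef_add_posSemidef (posDef_transpose_mul_mul hAuu.inv hBup) hApp
  have hMdet : IsUnit M.det := isUnit_iff_ne_zero.mpr hMpd.det_pos.ne'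
  have hM1 : M⁻¹ * M = 1 := Matrix.nonsing_inv_mul _ hMdet
  have hM1' : M * M⁻¹ = 1 := Matrix.mul_nonsing_inv _ hMdet
  -- `ζ` derivative data
  set dζ : ℝ → (Fin n → ℝ) := derivWithin ζ (Icc 0 T0) with hdζdef
  have hdζc : ContinuousOn dζ (Icc 0 T0) := hζ.continuousOn_derivWithin hIccU le_rfl
  have hζd : ∀ t ∈ Icc (0:ℝ) T0, HasDerivWithinAt ζ (dζ t) (Icc 0 T0) t := fun t ht =>
    ((hζ.differentiableOn one_ne_zero) t ht).hasDerivWithinAt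
  -- the ODE right-hand side
  set Aclm : (Fin k → ℝ) →L[ℝ] (Fin k → ℝ) := mvL (-(M⁻¹ * N)) with hAclm
  set g0 : ℝ → (Fin k → ℝ) := fun t => M⁻¹ *ᵥ (ξ t - C *ᵥ dζ t) with hg0
  have hg0c : ContinuousOn g0 (Icc 0 T0) := by
    have : ContinuousOn (fun t => ξ t - C *ᵥ dζ t) (Icc 0 T0) :=
      hξ.sub ((mvL C).continuous.comp_continuousOn hdζc)
    exact (mvL M⁻¹).continuous.comp_continuousOn this
  set G : ℝ → (Fin k → ℝ) := IccExtend hT0.le ((Icc (0:ℝ) T0).restrict g0) with hG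
  have hGc : Continuous G := hg0c.restrict.Icc_extend'
  have hGeq : ∀ t ∈ Icc (0:ℝ) T0, G t = g0 t := fun t ht => by
    rw [hG, IccExtend_of_mem hT0.le _ ht]; rfl
  -- solve the ODE
  obtain ⟨γ, hγ0, hγ'⟩ := linODE_exists Aclm G hGc γ0
  have hγdiff : Differentiable ℝ γ := fun t => (hγ' t).differentiableAt
  have hγderiv : deriv γ = fun t => Aclm (γ t) + G t := funext fun t => (hγ' t).deriv
  have hγC1 : ContDiff ℝ 1 γ := by
    rw [contDiff_one_iff_deriv]
    exact ⟨hγdiff, hγderiv ▸ (Aclm.continuous.comp hγdiff.continuous).add hGc⟩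
  -- the other two unknowns
  set α : ℝ → (Fin n → ℝ) := fun t => Auu⁻¹ *ᵥ (Bup *ᵥ γ t + ζ t) with hα
  set β : ℝ → (Fin m → ℝ) := fun t => -((Azz⁻¹ * Bzp) *ᵥ γ t) with hβ
  have hαC1 : ContDiffOn ℝ 1 α (Icc 0 T0) :=
    (mvL Auu⁻¹).contDiff.comp_contDiffOn
      ((((mvL Bup).contDiff.comp hγC1).contDiffOn).add hζ)
  have hβC1 : ContDiffOn ℝ 1 β (Icc 0 T0) :=
    (((mvL (Azz⁻¹ * Bzp)).contDiff.comp hγC1).neg).contDiffOn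
  -- derivative computations within the interval
  have hγD : ∀ t ∈ Icc (0:ℝ) T0,
      derivWithin γ (Icc 0 T0) t = Aclm (γ t) + g0 t := fun t ht => by
    rw [((hγ' t).hasDerivWithinAt).derivWithin (hIccU t ht), hGeq t ht]
  have hγDW : ∀ t ∈ Icc (0:ℝ) T0,
      HasDerivWithinAt γ (derivWithin γ (Icc 0 T0) t) (Icc 0 T0) t := fun t ht => by
    rw [hγD t ht, ← hGeq t ht]; exact (hγ' t).hasDerivWithinAt
  have hαD : ∀ t ∈ Icc (0:ℝ) T0,
      derivWithin α (Icc 0 T0) t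
        = Auu⁻¹ *ᵥ (Bup *ᵥ derivWithin γ (Icc 0 T0) t + dζ t) := by
    intro t ht
    have hin : HasDerivWithinAt (fun t => Bup *ᵥ γ t + ζ t)
        (Bup *ᵥ derivWithin γ (Icc 0 T0) t + dζ t) (Icc 0 T0) t := by
      have h1 := ((mvL Bup).hasFDerivAt.comp_hasDerivWithinAt t (hγDW t ht))
      exact h1.add (hζd t ht)
    have hout := (mvL Auu⁻¹).hasFDerivAt.comp_hasDerivWithinAt t hin
    exact hout.derivWithin (hIccU t ht)
  -- the key algebraic identity for equation 3
  have key : ∀ (Dγ : Fin k → ℝ) (z : Fin n → ℝ) (γv : Fin k → ℝ),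
      Bupᵀ *ᵥ (Auu⁻¹ *ᵥ (Bup *ᵥ Dγ + z)) + App *ᵥ Dγ - Bzpᵀ *ᵥ (-((Azz⁻¹ * Bzp) *ᵥ γv))
        = M *ᵥ Dγ + C *ᵥ z + N *ᵥ γv := by
    intro Dγ z γv
    simp only [hM, hC, hN, Matrix.mulVec_add, Matrix.add_mulVec, Matrix.mulVec_neg,
      Matrix.mulVec_mulVec, Matrix.mul_assoc, sub_neg_eq_add]
    abel
  -- equivalence between the third equation and the explicit ODE
  have keyODE : ∀ (Dγ : Fin k → ℝ) (z : Fin n → ℝ) (γv xiv : Fin k → ℝ),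
      (M *ᵥ Dγ + C *ᵥ z + N *ᵥ γv = xiv) ↔ (Dγ = -((M⁻¹ * N) *ᵥ γv) + M⁻¹ *ᵥ (xiv - C *ᵥ z)) := by
    intro Dγ z γv xiv
    constructor
    · intro h
      have := congrArg (fun w => M⁻¹ *ᵥ w) h
      simp only [Matrix.mulVec_add, Matrix.mulVec_mulVec, hM1, Matrix.one_mulVec] at this
      simp only [Matrix.mulVec_sub, Matrix.mulVec_mulVec]
      rw [← this]
      abel
    · intro h
      rw [h]
      simp only [Matrix.mulVec_add, Matrix.mulVec_neg, Matrix.mulVec_mulVec, Matrix.mulVec_sub,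
        ← Matrix.mul_assoc, hM1', Matrix.one_mul, Matrix.one_mulVec]
      abel
  refine ⟨α, β, γ, ⟨hαC1, hβC1, hγC1.contDiffOn, hγ0, ?_⟩, ?_⟩
  · -- the constructed triple satisfies the equations
    intro t ht
    refine ⟨?_, ?_, ?_⟩
    · show Auu *ᵥ (Auu⁻¹ *ᵥ (Bup *ᵥ γ t + ζ t)) = _
      rw [Matrix.mulVec_mulVec, hAuu1', Matrix.one_mulVec]
    · show Azz *ᵥ (-((Azz⁻¹ * Bzp) *ᵥ γ t)) = _
      rw [Matrix.mulVec_neg, Matrix.mulVec_mulVec, ← Matrix.mul_assoc, hAzz1', Matrix.one_mul]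
    · rw [hαD t ht]
      show Bupᵀ *ᵥ _ + App *ᵥ _ - Bzpᵀ *ᵥ (-((Azz⁻¹ * Bzp) *ᵥ γ t)) = ξ t
      rw [key]
      rw [keyODE _ _ _ (ξ t), hγD t ht]
      simp only [hAclm, mvL_apply, Matrix.neg_mulVec, hg0]
  · -- uniqueness
    rintro α' β' γ' ⟨hα'C1, hβ'C1, hγ'C1, hγ'0, heqs⟩ t ht
    have hγ'DW : ∀ s ∈ Icc (0:ℝ) T0,
        HasDerivWithinAt γ' (derivWithin γ' (Icc 0 T0) s) (Icc 0 T0) s := fun s hs =>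
      ((hγ'C1.differentiableOn one_ne_zero) s hs).hasDerivWithinAt
    have hα'eq : ∀ s ∈ Icc (0:ℝ) T0, α' s = Auu⁻¹ *ᵥ (Bup *ᵥ γ' s + ζ s) := by
      intro s hs
      have := congrArg (fun w => Auu⁻¹ *ᵥ w) (heqs s hs).1
      simpa only [Matrix.mulVec_mulVec, hAuu1, Matrix.one_mulVec] using this
    have hβ'eq : ∀ s ∈ Icc (0:ℝ) T0, β' s = -((Azz⁻¹ * Bzp) *ᵥ γ' s) := by
      intro s hs
      have := congrArg (fun w => Azz⁻¹ *ᵥ w) (heqs s hs).2.1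
      simpa only [Matrix.mulVec_mulVec, hAzz1, Matrix.one_mulVec, Matrix.mulVec_neg,
        Matrix.mul_assoc] using this
    have hα'D : ∀ s ∈ Icc (0:ℝ) T0,
        derivWithin α' (Icc 0 T0) s
          = Auu⁻¹ *ᵥ (Bup *ᵥ derivWithin γ' (Icc 0 T0) s + dζ s) := by
      intro s hs
      have hcongr : derivWithin α' (Icc 0 T0) s
          = derivWithin (fun u => Auu⁻¹ *ᵥ (Bup *ᵥ γ' u + ζ u)) (Icc 0 T0) s :=
        derivWithin_congr (fun u hu => hα'eq u hu) (hα'eq s hs)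
      rw [hcongr]
      have hin : HasDerivWithinAt (fun u => Bup *ᵥ γ' u + ζ u)
          (Bup *ᵥ derivWithin γ' (Icc 0 T0) s + dζ s) (Icc 0 T0) s :=
        ((mvL Bup).hasFDerivAt.comp_hasDerivWithinAt s (hγ'DW s hs)).add (hζd s hs)
      exact ((mvL Auu⁻¹).hasFDerivAt.comp_hasDerivWithinAt s hin).derivWithin (hIccU s hs)
    -- γ' satisfies the same ODE
    have hγ'ode : ∀ s ∈ Icc (0:ℝ) T0,
        HasDerivWithinAt γ' (Aclm (γ' s) + G s) (Icc 0 T0) s := by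
      intro s hs
      have h3 := (heqs s hs).2.2
      rw [hα'D s hs, hβ'eq s hs] at h3
      rw [key] at h3
      rw [keyODE _ _ _ (ξ s)] at h3
      have : derivWithin γ' (Icc 0 T0) s = Aclm (γ' s) + G s := by
        rw [h3, hGeq s hs]
        simp only [hAclm, mvL_apply, Matrix.neg_mulVec, hg0]
      rw [← this]
      exact hγ'DW s hs
    -- the difference solves the homogeneous ODE
    set δ : ℝ → (Fin k → ℝ) := fun s => γ' s - γ s with hδ
    have hδc : ContinuousOn δ (Icc 0 T0) :=
      (hγ'C1.continuousOn).sub (hγC1.continuous.continuousOn)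
    have hδd : ∀ s ∈ Icc (0:ℝ) T0, HasDerivWithinAt δ (Aclm (δ s)) (Icc 0 T0) s := by
      intro s hs
      have := (hγ'ode s hs).sub ((hγ' s).hasDerivWithinAt)
      have heq : Aclm (γ' s) + G s - (Aclm (γ s) + G s) = Aclm (δ s) := by
        rw [hδ]; rw [map_sub]; abel
      rwa [heq] at this
    have hδ0 : δ 0 = 0 := by rw [hδ]; simp [hγ'0, hγ0]
    have hδzero := linODE_unique Aclm hT0 δ hδc hδd hδ0
    have hγeq : γ' t = γ t := by
      have := hδzero t ht
      rw [hδ] at this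
      exact sub_eq_zero.mp this
    refine ⟨?_, ?_, hγeq⟩
    · rw [hα'eq t ht, hγeq]
    · rw [hβ'eq t ht, hγeq]
end

section
/- Let \Delta t > 0. Let A be a symmetric positive definite real n×n matrix, A_z a symmetric positive definite real m×m matrix, A_p a symmetric positive semidefinite real k×k matrix, B a real n×k matrix whose associated linear map \mathbb{R}^k \to \mathbb{R}^n is injective, and C a real m×k matrix. Then the linear map (U, Z, P) \mapsto (A U - B P,\ A_z Z + C P,\ B^T U - \Delta t\, C^T Z + A_p P) from \mathbb{R}^n \times \mathbb{R}^m \times \mathbb{R}^k to itself is bijective. -/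
open Matrix

lemma dot_swap {a b : ℕ} (M : Matrix (Fin a) (Fin b) ℝ) (y : Fin a → ℝ) (x : Fin b → ℝ) :
    y ⬝ᵥ M.mulVec x = x ⬝ᵥ Mᵀ.mulVec y := by
  rw [dotProduct_mulVec, ← mulVec_transpose, dotProduct_comm]

/-- Well-posedness of one backward Euler step of the fully discrete scheme, in matrix form:
the linear map `(U, Z, P) ↦ (A U - B P, A_z Z + C P, Bᵀ U - Δt Cᵀ Z + A_p P)` is bijective. -/
theorem backward_euler_step_bijective (Δt : ℝ) (hΔt : 0 < Δt) (n m k : ℕ)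
    (A : Matrix (Fin n) (Fin n) ℝ) (hA : A.PosDef)
    (Az : Matrix (Fin m) (Fin m) ℝ) (hAz : Az.PosDef)
    (Ap : Matrix (Fin k) (Fin k) ℝ) (hAp : Ap.PosSemidef)
    (B : Matrix (Fin n) (Fin k) ℝ) (hB : Function.Injective B.mulVec)
    (C : Matrix (Fin m) (Fin k) ℝ) :
    Function.Bijective
      (fun UZP : (Fin n → ℝ) × (Fin m → ℝ) × (Fin k → ℝ) =>
        (A.mulVec UZP.1 - B.mulVec UZP.2.2,
         Az.mulVec UZP.2.1 + C.mulVec UZP.2.2,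
         Bᵀ.mulVec UZP.1 - Δt • Cᵀ.mulVec UZP.2.1 + Ap.mulVec UZP.2.2)) := by
  let f : ((Fin n → ℝ) × (Fin m → ℝ) × (Fin k → ℝ)) →ₗ[ℝ]
      ((Fin n → ℝ) × (Fin m → ℝ) × (Fin k → ℝ)) :=
    { toFun := fun UZP =>
        (A.mulVec UZP.1 - B.mulVec UZP.2.2,
         Az.mulVec UZP.2.1 + C.mulVec UZP.2.2,
         Bᵀ.mulVec UZP.1 - Δt • Cᵀ.mulVec UZP.2.1 + Ap.mulVec UZP.2.2)
      map_add' := by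
        intro x y
        refine Prod.ext ?_ (Prod.ext ?_ ?_) <;>
          simp only [Prod.fst_add, Prod.snd_add, Prod.mk_add_mk, mulVec_add, smul_add] <;>
          abel
      map_smul' := by
        intro c x
        refine Prod.ext ?_ (Prod.ext ?_ ?_) <;>
          simp only [Prod.smul_fst, Prod.smul_snd, Prod.smul_mk, RingHom.id_apply,
            mulVec_smul, smul_sub, smul_add, smul_comm c Δt] }
  have hinj : Function.Injective f := by
    rw [← LinearMap.ker_eq_bot, LinearMap.ker_eq_bot']
    rintro ⟨U, Z, P⟩ h0
    have h1 : A.mulVec U - B.mulVec P = 0 := congrArg Prod.fst h0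
    have h2 : Az.mulVec Z + C.mulVec P = 0 := congrArg (Prod.fst ∘ Prod.snd) h0
    have h3 : Bᵀ.mulVec U - Δt • Cᵀ.mulVec Z + Ap.mulVec P = 0 :=
      congrArg (Prod.snd ∘ Prod.snd) h0
    have energy : U ⬝ᵥ A.mulVec U + Δt * (Z ⬝ᵥ Az.mulVec Z) + P ⬝ᵥ Ap.mulVec P = 0 := by
      have e1 : U ⬝ᵥ (A.mulVec U - B.mulVec P) = 0 := by rw [h1, dotProduct_zero]
      have e2 : Z ⬝ᵥ (Az.mulVec Z + C.mulVec P) = 0 := by rw [h2, dotProduct_zero]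
      have e3 : P ⬝ᵥ (Bᵀ.mulVec U - Δt • Cᵀ.mulVec Z + Ap.mulVec P) = 0 := by
        rw [h3, dotProduct_zero]
      have c1 : P ⬝ᵥ Bᵀ.mulVec U = U ⬝ᵥ B.mulVec P := by
        rw [dot_swap B U P]
      have c2 : P ⬝ᵥ Cᵀ.mulVec Z = Z ⬝ᵥ C.mulVec P := by
        rw [dot_swap C Z P]
      have := congrArg₂ (· + ·) (congrArg₂ (· + ·) e1 (congrArg (Δt * ·) e2)) e3
      simp only [dotProduct_sub, dotProduct_add, dotProduct_smul, smul_eq_mul] at this ⊢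
      rw [c1, c2] at this
      linarith [this]
    have hU : U = 0 := by
      by_contra hU
      have h1' := hA.dotProduct_mulVec_pos hU
      have h2' := hAz.posSemidef.dotProduct_mulVec_nonneg Z
      have h3' := hAp.dotProduct_mulVec_nonneg P
      simp only [star_trivial] at h1' h2' h3'
      nlinarith
    have hZ : Z = 0 := by
      by_contra hZ
      have h1' := hA.posSemidef.dotProduct_mulVec_nonneg U
      have h2' := hAz.dotProduct_mulVec_pos hZ
      have h3' := hAp.dotProduct_mulVec_nonneg P
      simp only [star_trivial] at h1' h2' h3'
      nlinarith
    have hP : P = 0 := by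
      have : B.mulVec P = 0 := by
        have := h1
        rw [hU, mulVec_zero, zero_sub, neg_eq_zero] at this
        exact this
      have hz : B.mulVec P = B.mulVec 0 := by rw [this, mulVec_zero]
      exact hB hz
    simp [hU, hZ, hP]
  exact ⟨hinj, LinearMap.injective_iff_surjective.mp hinj⟩
end
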